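/- For the M1 distribution f̂(v) = ρ (β/sinh β) e^{βv} on [-1,1] with β ≠ 0, the second moment equals q = ⟨v² f̂⟩ = ρ(1 − 2u/β), where u = coth β − 1/β. -/

import Mathlib

/-- For the M1 distribution `f̂(v) = ρ (β/sinh β) e^{βv}` on `[-1,1]` with `β ≠ 0`,
the second moment is `q = ⟨v² f̂⟩ = ρ (1 − 2u/β)` with `u = coth β − 1/β`. -/
theorem m1_closure_second_moment (ρ β : ℝ) (hρ : 0 < ρ) (hβ : β ≠ 0) :
    (1/2) * (∫ v in (-1:ℝ)..1, v^2 * (ρ * (β / Real.sinh β) * Real.exp (β * v)))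
      = ρ * (1 - 2 * (Real.cosh β / Real.sinh β - 1/β) / β) := by
  have hs : Real.sinh β ≠ 0 := Real.sinh_ne_zero.mpr hβ
  have key : (∫ v in (-1:ℝ)..1, v^2 * Real.exp (β * v))
      = Real.exp (β * 1) * (1^2/β - 2*1/β^2 + 2/β^3)
        - Real.exp (β * (-1)) * ((-1:ℝ)^2/β - 2*(-1)/β^2 + 2/β^3) := by
    have := intervalIntegral.integral_eq_sub_of_hasDerivAt
      (f := fun v : ℝ => Real.exp (β * v) * (v^2/β - 2*v/β^2 + 2/β^3))
      (f' := fun v : ℝ => v^2 * Real.exp (β * v)) (a := -1) (b := 1)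
      (fun v _ => by
        have h1 : HasDerivAt (fun v : ℝ => Real.exp (β * v)) (β * Real.exp (β * v)) v := by
          simpa [mul_comm] using ((hasDerivAt_id v).const_mul β).exp
        have h2 : HasDerivAt (fun v : ℝ => v^2/β - 2*v/β^2 + 2/β^3)
            (2*v/β - 2/β^2) v := by
          have h := (((hasDerivAt_pow 2 v).div_const β).sub
            (((hasDerivAt_id v).const_mul 2).div_const (β^2))).add_const (2/β^3)
          simpa using h
        have := h1.mul h2
        convert this using 1
        case e'_8 => funext x; rfl
        case e'_4 => rfl
        show v ^ 2 * Real.exp (β * v) = β * Real.exp (β * v) * (v ^ 2 / β - 2 * v / β ^ 2 + 2 / β ^ 3) + Real.exp (β * v) * (2 * v / β - 2 / β ^ 2)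
        field_simp
        ring)
      (by
        apply Continuous.intervalIntegrable
        continuity)
    simpa using this
  have expand : ∀ v : ℝ, v^2 * (ρ * (β / Real.sinh β) * Real.exp (β * v))
      = (ρ * (β / Real.sinh β)) * (v^2 * Real.exp (β * v)) := fun v => by ring
  simp only [expand]
  rw [intervalIntegral.integral_const_mul, key]
  rw [Real.cosh_eq, Real.sinh_eq] at *
  have he : Real.exp β * Real.exp (-β) = 1 := by
    rw [← Real.exp_add]; simp
  have hse : (Real.exp β - Real.exp (-β)) / 2 ≠ 0 := hs
  simp only [mul_one, mul_neg_one, Real.exp_neg]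
  have hep : Real.exp β ≠ 0 := Real.exp_ne_zero β
  have h1 : Real.exp β ^ 2 - 1 ≠ 0 := by
    intro h
    have h2 : (Real.exp β - 1) * (Real.exp β + 1) = 0 := by ring_nf; linarith
    rcases mul_eq_zero.1 h2 with h3 | h3
    · exact hβ (Real.exp_injective (by rw [Real.exp_zero]; linarith))
    · nlinarith [Real.exp_pos β]
  have hs' : Real.exp β - (Real.exp β)⁻¹ ≠ 0 := by
    intro h
    apply h1
    have := mul_eq_zero_of_left h (Real.exp β)
    field_simp at this
    linarith
  have e1 : Real.exp β - (Real.exp β)⁻¹ = (Real.exp β^2 - 1)/Real.exp β := by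
    field_simp
  have e2 : Real.exp β + (Real.exp β)⁻¹ = (Real.exp β^2 + 1)/Real.exp β := by
    field_simp
  have e3 : (Real.exp β)⁻¹ = 1/Real.exp β := by rw [inv_eq_one_div]
  rw [e1, e2, e3]
  field_simp [h1]
  ring
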